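/- arXiv:2001.00112 — 4 statements merged into one kernel-verified Lean document; each statement's English description precedes it below -/
import Mathlib

section
/- Let C > 0 and D ≥ 0. Let A : ℝ → ℝ be a cumulative arrival process and B a cumulative service process for A with rate C. If the system has bounded delay D (B (t + D) ≥ A t for every t), then the input is admissible: for all s ≤ t, A t - A s ≤ C * (t - s) + C * D; in particular A t ≤ C * (t + D) for every t ≥ 0. (Paper's Corollary 1: if the network has a bounded delay, the input traffic must be admissible.) -/
/-- Paper's Corollary 1: if the system has bounded delay `D`, then the input
traffic is admissible: `A t - A s ≤ C * (t - s) + C * D` for all `s ≤ t`,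
and in particular `A t ≤ C * (t + D)` for every `t ≥ 0`. -/
theorem bounded_delay_implies_admissible
    (C D : ℝ) (hC : 0 < C) (hD : 0 ≤ D)
    (A B : ℝ → ℝ)
    (hAmono : Monotone A) (hA0 : ∀ t ≤ (0 : ℝ), A t = 0)
    (hBmono : Monotone B)
    (hBA : ∀ t, B t ≤ A t)
    (hBrate : ∀ s t, s ≤ t → B t - B s ≤ C * (t - s))
    (hdelay : ∀ t, A t ≤ B (t + D)) :
    (∀ s t, s ≤ t → A t - A s ≤ C * (t - s) + C * D) ∧
    (∀ t, 0 ≤ t → A t ≤ C * (t + D)) := by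
  have key : ∀ s t : ℝ, s ≤ t → A t - A s ≤ C * (t - s) + C * D := by
    intro s t hst
    have h1 := hdelay t
    have h2 := hBrate s (t + D) (by linarith)
    have h3 := hBA s
    nlinarith
  refine ⟨key, fun t ht => ?_⟩
  have := key 0 t ht
  rw [hA0 0 le_rfl] at this
  linarith
end

section
/- Let C > 0 and D ≥ 0. Let A : ℝ → ℝ be a cumulative arrival process and B a work-conserving cumulative service process for A with rate C. If for every time t the in-volume over the window [t, t+D) is bounded by D * C, i.e. A (t + D) - B t ≤ D * C for every t, then the system has bounded delay D: B (t + D) ≥ A t for every t. (Paper's Theorem 2, sufficient condition: a work-conserving network with InVolume(t, D) ≤ D × C for all t has bounded delay D.) -/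
/-- Paper's Theorem 2 (sufficient condition): if the system is work-conserving
and `InVolume(t, D) = A (t + D) - B t ≤ D * C` for every `t`, then the system
has bounded delay `D`. -/
theorem invol_bound_implies_bounded_delay
    (C D : ℝ) (hC : 0 < C) (hD : 0 ≤ D)
    (A B : ℝ → ℝ)
    (hAmono : Monotone A) (hA0 : ∀ t ≤ (0 : ℝ), A t = 0)
    (hBmono : Monotone B)
    (hBA : ∀ t, B t ≤ A t)
    (hBrate : ∀ s t, s ≤ t → B t - B s ≤ C * (t - s))
    (hWC : ∀ s t, s ≤ t → (∀ u, s ≤ u → u < t → B u < A u) →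
      B t - B s = C * (t - s))
    (hinvol : ∀ t, A (t + D) - B t ≤ D * C) :
    ∀ t, A t ≤ B (t + D) := by
  intro t
  by_contra h
  push_neg at h
  have hle : t ≤ t + D := by linarith
  have hwc : B (t + D) - B t = C * (t + D - t) := by
    refine hWC t (t + D) hle ?_
    intro u hu hu'
    exact lt_of_le_of_lt (hBmono hu'.le) (lt_of_lt_of_le h (hAmono hu))
  have h1 := hinvol t
  have h2 : A t ≤ A (t + D) := hAmono hle
  have h3 : C * (t + D - t) = D * C := by ring
  linarith
end

section
/- Let K be a positive integer and for each class i ∈ {1, …, K} let A i : ℝ → ℝ be nondecreasing, let d i > 0 and C i ≥ 0, and suppose the class-i traffic is shaped so that A i (t + d i) - A i t ≤ C i * d i for every t. Fix k ∈ {1, …, K} and suppose that for every i ≤ k the ratio d k / d i is a positive integer. Then for every t, the aggregate in-volume of classes 1 through k over any window of length d k satisfies ∑_{i=1}^{k} (A i (t + d k) - A i t) ≤ d k * ∑_{i=1}^{k} C i. (The key aggregate in-volume inequality established in the proof of the paper's Theorem 4.) -/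
lemma telescope_shape (A : ℝ → ℝ) (C δ : ℝ)
    (hsh : ∀ t, A (t + δ) - A t ≤ C * δ) :
    ∀ m : ℕ, ∀ t, A (t + m * δ) - A t ≤ m * (C * δ) := by
  intro m
  induction m with
  | zero => intro t; simp
  | succ n ih =>
    intro t
    have h1 := ih t
    have h2 := hsh (t + n * δ)
    have : t + (n : ℝ) * δ + δ = t + (n + 1 : ℕ) * δ := by push_cast; ring
    rw [this] at h2
    push_cast at h2 ⊢
    linarith

/-- The key aggregate in-volume inequality from the proof of the paper's
Theorem 4: if each class `i` is shaped to `C i * d i` bits per window of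
length `d i`, and `d k / d i` is a positive integer for every `i ≤ k`, then
the aggregate in-volume of classes `1..k` over any window of length `d k`
is at most `d k * ∑_{i=1}^{k} C i`. -/
theorem aggregate_invol_bound
    (K : ℕ) (hK : 0 < K)
    (A : ℕ → ℝ → ℝ) (d Cb : ℕ → ℝ)
    (hAmono : ∀ i ∈ Finset.Icc 1 K, Monotone (A i))
    (hd : ∀ i ∈ Finset.Icc 1 K, 0 < d i)
    (hCb : ∀ i ∈ Finset.Icc 1 K, 0 ≤ Cb i)
    (hshape : ∀ i ∈ Finset.Icc 1 K, ∀ t, A i (t + d i) - A i t ≤ Cb i * d i)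
    (k : ℕ) (hk : k ∈ Finset.Icc 1 K)
    (hratio : ∀ i ∈ Finset.Icc 1 k, ∃ m : ℕ, 0 < m ∧ d k / d i = (m : ℝ)) :
    ∀ t, ∑ i ∈ Finset.Icc 1 k, (A i (t + d k) - A i t) ≤
      d k * ∑ i ∈ Finset.Icc 1 k, Cb i := by
  intro t
  rw [Finset.mul_sum]
  apply Finset.sum_le_sum
  intro i hi
  have hiK : i ∈ Finset.Icc 1 K := by
    simp only [Finset.mem_Icc] at *
    exact ⟨hi.1, hi.2.trans hk.2⟩
  obtain ⟨m, hm, hdk⟩ := hratio i hi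
  have hdi := hd i hiK
  have hdkmi : d k = m * d i := by
    field_simp at hdk; linarith [hdk]
  have := telescope_shape (A i) (Cb i) (d i) (hshape i hiK) m t
  calc A i (t + d k) - A i t ≤ m * (Cb i * d i) := by rw [hdkmi]; exact this
    _ = Cb i * (m * d i) := by ring
    _ = d k * Cb i := by rw [hdkmi]; ring
end

section
/- Let σ > 0 and D > 0. Consider a Quantum shaper with bucket size σ and delay parameter D, and let (t 1, s 1), …, (t n, s n) be the release events it produces, with nondecreasing release times t 1 ≤ t 2 ≤ … ≤ t n and sizes s j > 0, subject to the credit rule: event j may be released only if its size does not exceed the available credit at time t j, i.e. s j + ∑_{i < j, t i > t j - D} s i ≤ σ (credits consumed at time t i are replenished exactly at time t i + D, starting from a full bucket of σ credits). Then for every time t, the total bits released in any window of length D is bounded by σ: ∑_{j : t - D < t j ≤ t} s j ≤ σ. (The defining guarantee of the paper's Quantum shaper: the shaped flow's total bits during any arbitrary time window of size D are bounded by σ.) -/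
open Finset in
/-- The defining guarantee of the paper's Quantum shaper: if release events
`(t j, s j)` obey the credit rule (the released size plus all sizes consumed
and not yet replenished within the last `D` time units never exceeds `σ`),
then the total bits released in any window of length `D` is at most `σ`. -/
theorem quantum_shaper_window_bound
    (σ D : ℝ) (hσ : 0 < σ) (hD : 0 < D)
    (n : ℕ) (t s : Fin n → ℝ)
    (hmono : ∀ i j : Fin n, i ≤ j → t i ≤ t j)
    (hpos : ∀ j : Fin n, 0 < s j)
    (hcredit : ∀ j : Fin n,
      s j + ∑ i ∈ Finset.univ.filter (fun i : Fin n => i < j ∧ t j - D < t i),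
        s i ≤ σ) :
    ∀ τ : ℝ,
      ∑ j ∈ Finset.univ.filter (fun j : Fin n => τ - D < t j ∧ t j ≤ τ), s j
        ≤ σ := by
  intro τ
  set S := Finset.univ.filter (fun j : Fin n => τ - D < t j ∧ t j ≤ τ) with hS
  rcases S.eq_empty_or_nonempty with h | h
  · rw [h, Finset.sum_empty]; exact hσ.le
  · set j := S.max' h with hj
    have hjS : j ∈ S := S.max'_mem h
    have hjprop : τ - D < t j ∧ t j ≤ τ := by
      simpa [hS] using hjS
    have hsum : ∑ k ∈ S, s k = s j + ∑ k ∈ S.erase j, s k :=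
      (Finset.add_sum_erase S s hjS).symm
    rw [hsum]
    refine le_trans (add_le_add_right ?_ (s j)) (hcredit j)
    apply Finset.sum_le_sum_of_subset_of_nonneg
    · intro i hi
      have hij : i ≠ j := Finset.ne_of_mem_erase hi
      have hiS : i ∈ S := Finset.mem_of_mem_erase hi
      have hile : i ≤ j := S.le_max' i hiS
      have hiprop : τ - D < t i ∧ t i ≤ τ := by simpa [hS] using hiS
      simp only [Finset.mem_filter, Finset.mem_univ, true_and]
      exact ⟨lt_of_le_of_ne hile hij, lt_of_le_of_lt (by linarith [hjprop.2]) hiprop.1⟩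
    · intro i _ _
      exact (hpos i).le
end
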